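/- A nontrivial POVM on ℂ^d cannot be both informationally complete and have the eigenvalue-1 property, for d ≥ 2: if M = (M_1, ..., M_N) is a POVM on ℂ^d (d ≥ 2) such that every nonzero M_i has eigenvalue 1, then M is not informationally complete. -/

import Mathlib

open Matrix
open scoped ComplexOrder

private lemma trace_vecMulVec_mul {d : ℕ} (a b : Fin d → ℂ)
    (A : Matrix (Fin d) (Fin d) ℂ) :
    (vecMulVec a b * A).trace = b ⬝ᵥ (A *ᵥ a) := by
  simp only [Matrix.trace, Matrix.diag, Matrix.mul_apply, vecMulVec_apply,
    dotProduct, mulVec, dotProduct, Finset.mul_sum]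
  rw [Finset.sum_comm]
  exact Finset.sum_congr rfl fun q _ => Finset.sum_congr rfl fun p _ => by ring

private lemma conjT_vecMulVec {d : ℕ} (a b : Fin d → ℂ) :
    (vecMulVec a b)ᴴ = vecMulVec (star b) (star a) := by
  ext i j
  simp [vecMulVec_apply, Matrix.conjTranspose_apply, mul_comm]

private lemma vecMulVec_mulVec' {d : ℕ} (a b x : Fin d → ℂ) :
    vecMulVec a b *ᵥ x = (b ⬝ᵥ x) • a := by
  ext i
  simp only [vecMulVec_apply, mulVec, dotProduct, Pi.smul_apply, smul_eq_mul,
    Finset.mul_sum, Finset.sum_mul]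
  exact Finset.sum_congr rfl fun p _ => by ring

private lemma dotProduct_finsum {n m : ℕ} (u : Fin n → ℂ) (s : Finset (Fin m))
    (f : Fin m → Fin n → ℂ) :
    u ⬝ᵥ (∑ j ∈ s, f j) = ∑ j ∈ s, u ⬝ᵥ f j := by
  simp only [dotProduct, Finset.sum_apply, Finset.mul_sum]
  exact Finset.sum_comm

/-- For d ≥ 2, a POVM on ℂ^d with the eigenvalue-1 property is never
informationally complete. -/
theorem eigenvalue1_not_infoComplete
    (d N : ℕ) (hd : 2 ≤ d)
    (M : Fin N → Matrix (Fin d) (Fin d) ℂ)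
    (hMpos : ∀ i, (M i).PosSemidef) (hMsum : ∑ i, M i = 1)
    (heig : ∀ i, M i ≠ 0 →
      ∃ φ : Fin d → ℂ, star φ ⬝ᵥ φ = 1 ∧ (M i).mulVec φ = φ) :
    ¬ (∀ T : Matrix (Fin d) (Fin d) ℂ, T.IsHermitian →
        (∀ i, (T * M i).trace = 0) → T = 0) := by
  intro hIC
  -- some effect is nonzero
  have hex : ∃ i0, M i0 ≠ 0 := by
    by_contra h
    push_neg at h
    have h0 : (∑ i, M i) = 0 := Finset.sum_eq_zero fun i _ => h i
    rw [hMsum] at h0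
    have := congrFun (congrFun h0 ⟨0, by omega⟩) ⟨0, by omega⟩
    simp [Matrix.one_apply] at this
  obtain ⟨i0, hi0⟩ := hex
  obtain ⟨u, hu1, huev⟩ := heig i0 hi0
  -- M j *ᵥ u = 0 for j ≠ i0
  have hsum_u : ∑ j, (M j) *ᵥ u = u := by
    have h1 : ∑ j, (M j) *ᵥ u = (∑ j, M j) *ᵥ u := by
      ext r
      simp only [Finset.sum_apply, mulVec, dotProduct, Matrix.sum_apply,
        Finset.sum_mul]
      rw [Finset.sum_comm]
    rw [h1, hMsum, Matrix.one_mulVec]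
  have herase : ∑ j ∈ Finset.univ.erase i0, (M j) *ᵥ u = 0 := by
    have h2 : (M i0) *ᵥ u + ∑ j ∈ Finset.univ.erase i0, (M j) *ᵥ u
        = ∑ j, (M j) *ᵥ u :=
      Finset.add_sum_erase Finset.univ (fun j => (M j) *ᵥ u) (Finset.mem_univ i0)
    rw [huev, hsum_u] at h2
    calc ∑ j ∈ Finset.univ.erase i0, (M j) *ᵥ u
        = u + ∑ j ∈ Finset.univ.erase i0, (M j) *ᵥ u - u := by
          rw [add_sub_cancel_left]
      _ = 0 := by rw [h2, sub_self]
  have hMu : ∀ j, j ≠ i0 → (M j) *ᵥ u = 0 := by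
    intro j hj
    have hdotsum : ∑ j ∈ Finset.univ.erase i0, star u ⬝ᵥ ((M j) *ᵥ u) = 0 := by
      rw [← dotProduct_finsum, herase, dotProduct_zero]
    have hnn : ∀ j ∈ Finset.univ.erase i0, 0 ≤ star u ⬝ᵥ ((M j) *ᵥ u) :=
      fun j _ => (hMpos j).dotProduct_mulVec_nonneg u
    have := (Finset.sum_eq_zero_iff_of_nonneg hnn).mp hdotsum j
      (Finset.mem_erase.mpr ⟨hj, Finset.mem_univ j⟩)
    exact ((hMpos j).dotProduct_mulVec_zero_iff u).mp this
  -- u ≠ 0, pick coordinates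
  have hune : u ≠ 0 := by
    intro h; rw [h] at hu1; simp at hu1
  obtain ⟨k, hk⟩ : ∃ k, u k ≠ 0 := by
    by_contra h; push_neg at h; exact hune (funext h)
  haveI : Nontrivial (Fin d) := Fin.nontrivial_iff_two_le.mpr hd
  obtain ⟨l, hlk⟩ := exists_ne k
  -- build v ⊥ u, v ≠ 0
  set v : Fin d → ℂ := fun m =>
    star (u k) * (if m = l then 1 else 0) - star (u l) * (if m = k then 1 else 0)
    with hv
  have huv : star u ⬝ᵥ v = 0 := by
    simp only [hv, dotProduct, Pi.star_apply, mul_sub, mul_ite, mul_one, mul_zero,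
      Finset.sum_sub_distrib, Finset.sum_ite_eq', Finset.mem_univ, if_true]
    ring
  have hvu : star v ⬝ᵥ u = 0 := by
    simp only [hv, dotProduct, Pi.star_apply, star_sub, star_mul', star_star,
      apply_ite (star : ℂ → ℂ), star_one, star_zero, sub_mul, mul_ite, ite_mul,
      one_mul, zero_mul, mul_one, mul_zero, Finset.sum_sub_distrib,
      Finset.sum_ite_eq', Finset.mem_univ, if_true]
    ring
  have hvne : v ≠ 0 := by
    intro h
    have h3 := congrFun h l
    simp only [hv, Pi.zero_apply, if_pos rfl, mul_one, if_neg hlk, mul_zero,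
      sub_zero] at h3
    exact hk (by simpa using congrArg star h3)
  -- the witness T
  set T : Matrix (Fin d) (Fin d) ℂ :=
    vecMulVec u (star v) + vecMulVec v (star u) with hT
  have hTherm : T.IsHermitian := by
    rw [Matrix.IsHermitian, hT, Matrix.conjTranspose_add, conjT_vecMulVec,
      conjT_vecMulVec, star_star, star_star, add_comm]
  have hMiu : ∀ i, (M i) *ᵥ u = (if i = i0 then u else 0) := by
    intro i
    by_cases h : i = i0
    · simp [h, huev]
    · simp [h, hMu i h]
  have htr : ∀ i, (T * M i).trace = 0 := by
    intro i
    rw [hT, Matrix.add_mul, Matrix.trace_add, trace_vecMulVec_mul,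
      trace_vecMulVec_mul]
    have h1 : star v ⬝ᵥ ((M i) *ᵥ u) = 0 := by
      rw [hMiu i]
      by_cases h : i = i0 <;> simp [h, hvu]
    have h2 : star u ⬝ᵥ ((M i) *ᵥ v) = 0 := by
      rw [dotProduct_mulVec]
      have h4 : star u ᵥ* M i = star ((M i) *ᵥ u) := by
        rw [Matrix.star_mulVec, (hMpos i).1]
      rw [h4, hMiu i]
      by_cases h : i = i0 <;> simp [h, huv]
    rw [h1, h2, add_zero]
  have hT0 := hIC T hTherm htr
  -- but T ≠ 0
  have hTv : T *ᵥ v = (star v ⬝ᵥ v) • u := by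
    rw [hT, Matrix.add_mulVec, vecMulVec_mulVec', vecMulVec_mulVec', huv,
      zero_smul, add_zero]
  have hfin : star u ⬝ᵥ (T *ᵥ v) = star v ⬝ᵥ v := by
    rw [hTv, dotProduct_smul, smul_eq_mul, hu1, mul_one]
  rw [hT0, Matrix.zero_mulVec, dotProduct_zero] at hfin
  exact hvne (dotProduct_star_self_eq_zero.mp hfin.symm)
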